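/- Let n ≥ 2 and let η_n = d_1⋯d_n(10)^∞ be a sequence with d_{n−1}d_n = 01 such that (η_n)_{q_2} has exactly two distinct q_2-expansions. If d_1d_2 = 01, then both (0η_n)_{q_2} and (1η_n)_{q_2} have exactly two distinct q_2-expansions. -/

import Mathlib

open Set

/-- The value `∑ dᵢ / qⁱ` (i ≥ 1) of a digit sequence `d` in base `q`
(here `d i` is the digit `d_{i+1}` of the paper). -/
noncomputable def expVal (q : ℝ) (d : ℕ → ℕ) : ℝ := ∑' i : ℕ, (d i : ℝ) / q ^ (i + 1)

/-- The set of `q`-expansions of `x`: 0-1 digit sequences whose value in base `q` is `x`. -/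
def expansions (q x : ℝ) : Set (ℕ → ℕ) := {d | (∀ i, d i ≤ 1) ∧ expVal q d = x}

/-- The map `T_{q,s}(x) = qx - s`. -/
def Tmap (q : ℝ) (s : ℕ) (x : ℝ) : ℝ := q * x - s

/-- `T_{q,d₁⋯dₙ} = T_{q,d₁} ∘ ⋯ ∘ T_{q,dₙ}` (the identity for the empty word). -/
def Tword (q : ℝ) (w : List ℕ) (x : ℝ) : ℝ := w.foldr (fun s y => Tmap q s y) x

/-- The switch region `S_q = [1/q, 1/(q²-q)]`. -/
def switchRegion (q : ℝ) : Set ℝ := Set.Icc (1 / q) (1 / (q ^ 2 - q))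

/-- `A₁(q)`: points of the switch region for which both `T_{q,0}(x)` and `T_{q,1}(x)`
have finitely many `q`-expansions. -/
def A1set (q : ℝ) : Set ℝ :=
  {x ∈ switchRegion q | (expansions q (Tmap q 0 x)).Finite ∧ (expansions q (Tmap q 1 x)).Finite}

/-- `A₂(q)`: points of the switch region for which exactly one of `T_{q,0}(x)`, `T_{q,1}(x)`
has finitely many `q`-expansions. -/
def A2set (q : ℝ) : Set ℝ :=
  {x ∈ switchRegion q | Xor' (expansions q (Tmap q 0 x)).Finite (expansions q (Tmap q 1 x)).Finite}

/-- `A₃(q)`: points of the switch region for which both `T_{q,0}(x)` and `T_{q,1}(x)`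
have infinitely many `q`-expansions. -/
def A3set (q : ℝ) : Set ℝ :=
  {x ∈ switchRegion q | (expansions q (Tmap q 0 x)).Infinite ∧ (expansions q (Tmap q 1 x)).Infinite}

/-- `x` is a `q`-null infinite point: it has infinitely many `q`-expansions and every
branching point of `x` (an image `T_{q,d₁⋯dₙ}(x)` lying in `A₂(q) ∪ A₃(q)`) lies in `A₂(q)`. -/
def IsNullInfinite (q x : ℝ) : Prop :=
  (expansions q x).Infinite ∧
    ∀ w : List ℕ, (∀ s ∈ w, s ≤ 1) →
      Tword q w x ∈ A2set q ∪ A3set q → Tword q w x ∈ A2set q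

/-- The interval `J_q = [(q+q²)/(q⁴-1), (1+q³)/(q⁴-1)]`. -/
def Jset (q : ℝ) : Set ℝ := Set.Icc ((q + q ^ 2) / (q ^ 4 - 1)) ((1 + q ^ 3) / (q ^ 4 - 1))

/-- `B_m` (for a finite `m`): the set of `q ∈ (1,2)` such that some `x ∈ [0, 1/(q-1)]`
has exactly `m` different `q`-expansions. -/
def Bset (m : ℕ) : Set ℝ :=
  {q | q ∈ Set.Ioo (1 : ℝ) 2 ∧
    ∃ x ∈ Set.Icc (0 : ℝ) (1 / (q - 1)), Cardinal.mk ↥(expansions q x) = (m : Cardinal)}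

/-- `B_{ℵ₀}`: the set of `q ∈ (1,2)` such that some `x ∈ [0, 1/(q-1)]` has exactly
countably infinitely many different `q`-expansions. -/
def BalephSet : Set ℝ :=
  {q | q ∈ Set.Ioo (1 : ℝ) 2 ∧
    ∃ x ∈ Set.Icc (0 : ℝ) (1 / (q - 1)), Cardinal.mk ↥(expansions q x) = Cardinal.aleph0}

/-- `U_k`: the set of `x ∈ [0, 1/(q-1)]` having exactly `k` different `q`-expansions. -/
def Uset (q : ℝ) (k : ℕ) : Set ℝ :=
  {x ∈ Set.Icc (0 : ℝ) (1 / (q - 1)) | Cardinal.mk ↥(expansions q x) = (k : Cardinal)}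

/-- `ε_k = (01)^k (10)^∞`; in particular `eps 0 = (10)^∞`. -/
def eps (k : ℕ) : ℕ → ℕ := fun i => if i < 2 * k then i % 2 else (i - 2 * k + 1) % 2

/-- Prepend the digit `s`, repeated `m` times, to the digit sequence `d`. -/
def prep (s m : ℕ) (d : ℕ → ℕ) : ℕ → ℕ := fun i => if i < m then s else d (i - m)

/-- Reflection of a digit sequence: each digit `d` is replaced by `1 - d`. -/
def reflSeq (d : ℕ → ℕ) : ℕ → ℕ := fun i => 1 - d i

/-- Concatenation of a finite word with an infinite digit sequence. -/
def seqCat (w : List ℕ) (t : ℕ → ℕ) : ℕ → ℕ :=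
  fun i => if i < w.length then w.getD i 0 else t (i - w.length)

/-- The sets `E_m` of the paper: for odd `m` (`m = 1, 3`),
`E_m = ⋃_{k≥1} {(01^{m+1}ε_k)_q, (10^m ε_k)_q} \ {(10ε₁)_q}`; for even `m` (`m = 2, 4`),
`E_m = {(01^m(10)^∞)_q} ∪ ⋃_{k≥1} {(01^{m+1}ε_k)_q, (10^m ε_k)_q}`. -/
noncomputable def Eset (q : ℝ) (m : ℕ) : Set ℝ :=
  if m % 2 = 1 then
    (⋃ k : ℕ, {expVal q (prep 0 1 (prep 1 (m + 1) (eps (k + 1)))),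
               expVal q (prep 1 1 (prep 0 m (eps (k + 1))))}) \
      {expVal q (prep 1 1 (prep 0 1 (eps 1)))}
  else
    {expVal q (prep 0 1 (prep 1 m (eps 0)))} ∪
      ⋃ k : ℕ, {expVal q (prep 0 1 (prep 1 (m + 1) (eps (k + 1)))),
                expVal q (prep 1 1 (prep 0 m (eps (k + 1))))}

section Aux
variable {q : ℝ}

lemma summable_aux (hq : 1 < q) (d : ℕ → ℕ) (hd : ∀ i, d i ≤ 1) :
    Summable (fun i : ℕ => (d i : ℝ) / q ^ (i + 1)) := by
  have hq0 : 0 < q := by linarith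
  have hg : Summable (fun i : ℕ => (1 / q) ^ (i + 1)) := by
    have h := (summable_geometric_of_lt_one (by positivity)
      (by rw [div_lt_one hq0]; linarith) : Summable (fun i : ℕ => (1/q) ^ i)).mul_left (1/q)
    refine h.congr fun i => ?_
    rw [pow_succ]; ring
  refine Summable.of_nonneg_of_le (fun i => by positivity) (fun i => ?_) hg
  have h1 : (d i : ℝ) ≤ 1 := by exact_mod_cast hd i
  have : (1 / q) ^ (i + 1) = 1 / q ^ (i+1) := by rw [one_div, one_div, inv_pow]
  rw [this]
  exact div_le_div_of_nonneg_right h1 (by positivity)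

lemma expVal_nonneg (hq : 0 < q) (d : ℕ → ℕ) : 0 ≤ expVal q d :=
  tsum_nonneg fun i => by positivity

lemma expVal_le (hq : 1 < q) (d : ℕ → ℕ) (hd : ∀ i, d i ≤ 1) :
    expVal q d ≤ 1 / (q - 1) := by
  have hq0 : 0 < q := by linarith
  have hg : Summable (fun i : ℕ => (1 / q) ^ (i + 1)) := by
    have h := (summable_geometric_of_lt_one (by positivity)
      (by rw [div_lt_one hq0]; linarith) : Summable (fun i : ℕ => (1/q) ^ i)).mul_left (1/q)
    refine h.congr fun i => ?_
    rw [pow_succ]; ring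
  have hle : expVal q d ≤ ∑' i : ℕ, (1 / q) ^ (i + 1) := by
    refine Summable.tsum_le_tsum (fun i => ?_) (summable_aux hq d hd) hg
    have h1 : (d i : ℝ) ≤ 1 := by exact_mod_cast hd i
    have : (1 / q) ^ (i + 1) = 1 / q ^ (i+1) := by rw [one_div, one_div, inv_pow]
    rw [this]
    exact div_le_div_of_nonneg_right h1 (by positivity)
  refine hle.trans ?_
  have : ∑' i : ℕ, (1 / q) ^ (i + 1) = (1/q) * ∑' i : ℕ, (1 / q) ^ i := by
    rw [← tsum_mul_left]
    exact tsum_congr fun i => by rw [pow_succ]; ring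
  rw [this, tsum_geometric_of_lt_one (by positivity) (by rw [div_lt_one hq0]; linarith)]
  have heq : 1/q * ((1:ℝ) - 1/q)⁻¹ = 1/(q-1) := by
    rw [show (1:ℝ) - 1/q = (q-1)/q by field_simp]
    rw [inv_div]
    field_simp
  rw [heq]

lemma expVal_prep (hq : 1 < q) (s : ℕ) (d : ℕ → ℕ) (hd : ∀ i, d i ≤ 1) (hs : s ≤ 1) :
    expVal q (prep s 1 d) = ((s : ℝ) + expVal q d) / q := by
  have hq0 : 0 < q := by linarith
  have hdig : ∀ i, prep s 1 d i ≤ 1 := by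
    intro i; unfold prep; split
    · exact hs
    · exact hd _
  have hsum := summable_aux hq _ hdig
  rw [expVal, Summable.tsum_eq_zero_add hsum]
  have h0 : ((prep s 1 d 0 : ℕ) : ℝ) / q ^ (0+1) = (s:ℝ)/q := by
    simp [prep]
  have h1 : ∀ i : ℕ, ((prep s 1 d (i+1) : ℕ) : ℝ) / q ^ (i+1+1)
      = (1/q) * ((d i : ℝ) / q ^ (i+1)) := by
    intro i
    have : prep s 1 d (i+1) = d i := by simp [prep]
    rw [this, pow_succ]
    ring
  rw [h0]
  rw [tsum_congr h1, tsum_mul_left]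
  rw [expVal]
  field_simp

lemma expVal_shift (hq : 1 < q) (e : ℕ → ℕ) (he : ∀ i, e i ≤ 1) :
    expVal q e = ((e 0 : ℝ) + expVal q (fun i => e (i + 1))) / q := by
  have : e = prep (e 0) 1 (fun i => e (i + 1)) := by
    funext i
    rcases i with _ | i <;> simp [prep]
  conv_lhs => rw [this]
  exact expVal_prep hq _ _ (fun i => he _) (he 0)

lemma expVal_split (hq : 1 < q) (k : ℕ) (a : ℕ → ℕ) (ha : ∀ i, a i ≤ 1) :
    expVal q a = (∑ i ∈ Finset.range k, (a i : ℝ) / q ^ (i + 1))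
      + expVal q (fun i => a (i + k)) / q ^ k := by
  have hq0 : 0 < q := by linarith
  have hs := summable_aux hq a ha
  rw [expVal, ← hs.sum_add_tsum_nat_add k]
  congr 1
  rw [expVal, ← tsum_div_const]
  refine tsum_congr fun i => ?_
  rw [div_div, ← pow_add]
  ring_nf

lemma prep_inj (s : ℕ) : Function.Injective (prep s 1) := by
  intro a b h
  funext i
  have := congrFun h (i + 1)
  simpa [prep] using this


noncomputable def gr (q v : ℝ) : ℕ → ℝ
  | 0 => v
  | (k+1) => q * gr q v k - (if 1 ≤ q * gr q v k then 1 else 0)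

lemma exists_expansion (hq : 1 < q) (hq2 : q < 2) {v : ℝ} (h0 : 0 ≤ v)
    (h1 : v ≤ 1 / (q - 1)) :
    ∃ d : ℕ → ℕ, (∀ i, d i ≤ 1) ∧ expVal q d = v := by
  have hq0 : 0 < q := by linarith
  have hqm : (0:ℝ) < q - 1 := by linarith
  set d : ℕ → ℕ := fun k => if 1 ≤ q * gr q v k then 1 else 0 with hd
  have hdig : ∀ k, d k ≤ 1 := by
    intro k; by_cases h : 1 ≤ q * gr q v k <;> simp [hd, h]
  have hinv : ∀ k, 0 ≤ gr q v k ∧ gr q v k ≤ 1 / (q - 1) := by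
    intro k
    induction k with
    | zero => exact ⟨h0, h1⟩
    | succ k ih =>
      show 0 ≤ q * gr q v k - _ ∧ q * gr q v k - _ ≤ _
      have hub : q * gr q v k ≤ q / (q - 1) := by
        rw [div_eq_mul_inv, ← one_div]
        exact mul_le_mul_of_nonneg_left ih.2 (le_of_lt hq0)
      have hqd : q / (q-1) = 1 + 1/(q-1) := by field_simp; ring
      split
      case isTrue h =>
        constructor
        · linarith
        · rw [hqd] at hub; linarith
      case isFalse h =>
        push_neg at h
        have h1' : (1:ℝ) ≤ 1/(q-1) := by
          rw [le_div_iff₀ hqm]; linarith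
        constructor
        · have := ih.1; nlinarith
        · linarith
  have hstep : ∀ k, gr q v (k+1) = q * gr q v k - d k := by
    intro k; by_cases h : 1 ≤ q * gr q v k <;> simp [gr, hd, h]
  have hpart : ∀ k, v = (∑ i ∈ Finset.range k, (d i : ℝ) / q ^ (i+1)) + gr q v k / q ^ k := by
    intro k
    induction k with
    | zero => simp [gr]
    | succ k ih =>
      rw [Finset.sum_range_succ]
      rw [hstep k]
      have : (q * gr q v k - ↑(d k)) / q ^ (k+1)
          = gr q v k / q ^ k - (d k : ℝ) / q ^ (k+1) := by
        rw [pow_succ]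
        field_simp
      rw [this]
      linarith [ih]
  refine ⟨d, hdig, ?_⟩
  have hsum := summable_aux hq d hdig
  have hlim1 : Filter.Tendsto (fun k => ∑ i ∈ Finset.range k, (d i : ℝ) / q ^ (i+1))
      Filter.atTop (nhds (expVal q d)) := hsum.hasSum.tendsto_sum_nat
  have hlim2 : Filter.Tendsto (fun k => ∑ i ∈ Finset.range k, (d i : ℝ) / q ^ (i+1))
      Filter.atTop (nhds v) := by
    have hrem : Filter.Tendsto (fun k => gr q v k / q ^ k) Filter.atTop (nhds 0) := by
      apply squeeze_zero (fun k => div_nonneg (hinv k).1 (by positivity))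
      · intro k
        show gr q v k / q ^ k ≤ (1/(q-1)) * (1/q) ^ k
        rw [div_pow, one_pow, show (1/(q-1)) * (1/q^k) = (1/(q-1))/q^k by ring]
        exact div_le_div_of_nonneg_right (hinv k).2 (by positivity)
      · have : Filter.Tendsto (fun k : ℕ => (1/q) ^ k) Filter.atTop (nhds 0) := by
          apply tendsto_pow_atTop_nhds_zero_of_lt_one (by positivity)
          rw [div_lt_one hq0]; linarith
        simpa using this.const_mul (1/(q-1))
    have : (fun k => ∑ i ∈ Finset.range k, (d i : ℝ) / q ^ (i+1))
        = fun k => v - gr q v k / q ^ k := by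
      funext k; linarith [hpart k]
    rw [this]
    simpa using (tendsto_const_nhds (x := v)).sub hrem
  exact tendsto_nhds_unique hlim1 hlim2

lemma forced0 (hq : 1 < q) {y : ℝ} (hy : y < 1 / q) :
    expansions q y = prep 0 1 '' expansions q (q * y) := by
  have hq0 : 0 < q := by linarith
  ext e
  constructor
  · rintro ⟨he1, he2⟩
    have hsh := expVal_shift hq e he1
    have htail0 : 0 ≤ expVal q (fun i => e (i+1)) := expVal_nonneg hq0 _
    have h0 : e 0 = 0 := by
      by_contra h
      have h1 : e 0 = 1 := by have := he1 0; omega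
      rw [h1] at hsh
      rw [he2] at hsh
      have : 1 / q ≤ y := by
        rw [hsh, div_le_div_iff₀ hq0 hq0]
        push_cast
        nlinarith
      linarith
    refine ⟨fun i => e (i+1), ⟨fun i => he1 _, ?_⟩, ?_⟩
    · rw [he2, h0] at hsh
      push_cast at hsh
      rw [hsh]
      field_simp
      ring
    · funext i
      rcases i with _ | i <;> simp [prep, h0]
  · rintro ⟨t, ⟨ht1, ht2⟩, rfl⟩
    have hpd : ∀ i, prep 0 1 t i ≤ 1 := by
      intro i; unfold prep; split
      exacts [by norm_num, ht1 _]
    refine ⟨hpd, ?_⟩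
    rw [expVal_prep hq 0 t ht1 (by norm_num), ht2]
    push_cast
    field_simp
    ring

lemma forced1 (hq : 1 < q) {y : ℝ} (hy : 1 / (q * (q - 1)) < y) :
    expansions q y = prep 1 1 '' expansions q (q * y - 1) := by
  have hq0 : 0 < q := by linarith
  have hqm : (0:ℝ) < q - 1 := by linarith
  ext e
  constructor
  · rintro ⟨he1, he2⟩
    have hsh := expVal_shift hq e he1
    have htail : expVal q (fun i => e (i+1)) ≤ 1/(q-1) := expVal_le hq _ (fun i => he1 _)
    have h0 : e 0 = 1 := by
      by_contra h
      have h1 : e 0 = 0 := by have := he1 0; omega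
      rw [h1] at hsh
      rw [he2] at hsh
      push_cast at hsh
      have : y ≤ 1 / (q * (q-1)) := by
        rw [hsh]
        rw [div_le_div_iff₀ hq0 (by positivity)]
        calc (0 + expVal q (fun i => e (i+1))) * (q * (q-1))
            ≤ (1/(q-1)) * (q * (q-1)) := by
              apply mul_le_mul_of_nonneg_right _ (by positivity)
              simpa using htail
          _ = 1 * q := by field_simp
      linarith
    refine ⟨fun i => e (i+1), ⟨fun i => he1 _, ?_⟩, ?_⟩
    · rw [he2, h0] at hsh
      push_cast at hsh
      rw [hsh]
      field_simp
      ring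
    · funext i
      rcases i with _ | i <;> simp [prep, h0]
  · rintro ⟨t, ⟨ht1, ht2⟩, rfl⟩
    have hpd : ∀ i, prep 1 1 t i ≤ 1 := by
      intro i; unfold prep; split
      exacts [by norm_num, ht1 _]
    refine ⟨hpd, ?_⟩
    rw [expVal_prep hq 1 t ht1 (by norm_num), ht2]
    push_cast
    field_simp
    ring

end Aux

lemma eps0_val {q : ℝ} (hq : 1 < q) : expVal q (eps 0) = q / (q ^ 2 - 1) := by
  have hq0 : 0 < q := by linarith
  have hq1 : (0:ℝ) < q^2 - 1 := by nlinarith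
  rw [expVal]
  have hs : HasSum (fun i : ℕ => ((eps 0 i : ℕ) : ℝ) / q ^ (i+1)) (q / (q^2-1)) := by
    have hinj : Function.Injective (fun j : ℕ => 2 * j) := fun a b h => by dsimp only at h; omega
    rw [← Function.Injective.hasSum_iff hinj ?_]
    · have hgeo : HasSum (fun j : ℕ => (1/q) * ((1/q^2) ^ j)) ((1/q) * (1 - 1/q^2)⁻¹) := by
        exact (hasSum_geometric_of_lt_one (by positivity) (by rw [div_lt_one (by positivity)]; nlinarith)).mul_left _
      have heq : (fun j : ℕ => ((eps 0 (2*j) : ℕ) : ℝ) / q ^ (2*j+1)) = fun j : ℕ => (1/q) * ((1/q^2) ^ j) := by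
        funext j
        have h1 : eps 0 (2*j) = 1 := by simp [eps]
        rw [h1]
        rw [div_pow, one_pow, ← pow_mul]
        push_cast
        field_simp
        ring
      have hval : (1/q) * ((1:ℝ) - 1/q^2)⁻¹ = q / (q^2 - 1) := by
        rw [show (1:ℝ) - 1/q^2 = (q^2-1)/q^2 by field_simp]
        rw [inv_div]
        field_simp
      rw [show (fun i : ℕ => ((eps 0 i : ℕ) : ℝ) / q ^ (i+1)) ∘ (fun j : ℕ => 2 * j)
          = fun j : ℕ => ((eps 0 (2*j) : ℕ) : ℝ) / q ^ (2*j+1) from rfl, heq]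
      rw [← hval]
      exact hgeo
    · intro x hx
      have hodd : x % 2 = 1 := by
        rcases Nat.even_or_odd x with he | ho
        · exfalso; apply hx; obtain ⟨m, hm⟩ := he; exact ⟨m, by dsimp only; omega⟩
        · obtain ⟨m, hm⟩ := ho; omega
      have : eps 0 x = 0 := by simp [eps]; omega
      simp [this]
  exact hs.tsum_eq


section Main

lemma qbounds {q : ℝ} (h1 : 1 < q) (h2 : q < 2) (hr : q ^ 4 = 2 * q ^ 2 + q + 1) :
    1.7106 < q ∧ q < 1.7107 := by
  constructor
  · nlinarith [sq_nonneg q, sq_nonneg (q - 1.7106), sq_nonneg (q + 1.7106),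
      sq_nonneg (q*q - 2.92615), sq_nonneg (q-1)]
  · nlinarith [sq_nonneg q, sq_nonneg (q - 1.7107), sq_nonneg (q + 1.7107),
      sq_nonneg (q*q - 2.9265), sq_nonneg (q-1)]



set_option maxHeartbeats 1600000 in
/-- let `η_n = d₁⋯d_n(10)^∞` with `n ≥ 2`, `d_{n-1}d_n = 01`, and suppose
`(η_n)_{q₂}` has exactly two `q₂`-expansions. If `d₁d₂ = 01` then both `(0η_n)_{q₂}` and
`(1η_n)_{q₂}` have exactly two `q₂`-expansions. -/
theorem stmt11 (q2 : ℝ) (hq2 : q2 ∈ Set.Ioo (1 : ℝ) 2)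
    (hq2r : q2 ^ 4 = 2 * q2 ^ 2 + q2 + 1)
    (n : ℕ) (hn : 2 ≤ n) (w : List ℕ) (hlen : w.length = n) (hdig : ∀ s ∈ w, s ≤ 1)
    (hend : w.getD (n - 2) 0 = 0 ∧ w.getD (n - 1) 0 = 1)
    (hstart : w.getD 0 0 = 0 ∧ w.getD 1 0 = 1)
    (htwo : Cardinal.mk ↥(expansions q2 (expVal q2 (seqCat w (eps 0)))) = 2) :
    Cardinal.mk ↥(expansions q2 (expVal q2 (prep 0 1 (seqCat w (eps 0))))) = 2 ∧
      Cardinal.mk ↥(expansions q2 (expVal q2 (prep 1 1 (seqCat w (eps 0))))) = 2 := by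
  obtain ⟨hq1, hqlt2⟩ := hq2
  have hq0 : (0:ℝ) < q2 := by linarith
  obtain ⟨hlb, hub⟩ := qbounds hq1 hqlt2 hq2r
  have hqm : (0:ℝ) < q2 - 1 := by linarith
  have hsql : (2.92615:ℝ) < q2^2 := by nlinarith
  have hsqu : q2^2 < 2.9265 := by nlinarith
  have hq21 : (0:ℝ) < q2^2 - 1 := by nlinarith
  set η : ℕ → ℕ := seqCat w (eps 0) with hη
  have hεdig : ∀ i, eps 0 i ≤ 1 := fun i => by unfold eps; split <;> omega
  have hwget : ∀ i, w.getD i 0 ≤ 1 := by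
    intro i
    by_cases h : i < w.length
    · rw [List.getD_eq_getElem _ _ h]; exact hdig _ (List.getElem_mem _)
    · rw [List.getD_eq_default _ _ (by omega)]; exact Nat.zero_le 1
  have hηdig : ∀ i, η i ≤ 1 := by
    intro i; rw [hη]; unfold seqCat; split
    · exact hwget i
    · exact hεdig _
  obtain ⟨x, hxdef⟩ : ∃ x' : ℝ, expVal q2 η = x' := ⟨_, rfl⟩
  rw [hxdef] at htwo
  have hx0 : 0 ≤ x := hxdef ▸ expVal_nonneg hq0 η
  have hηlt : ∀ i, i < n → η i = w.getD i 0 := by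
    intro i hi; rw [hη]; unfold seqCat; rw [if_pos (by omega)]
  have hηge : ∀ i, n ≤ i → η i = eps 0 (i - n) := by
    intro i hi; rw [hη]; unfold seqCat; rw [if_neg (by omega), hlen]
  -- value of the tail (10)^infty
  obtain ⟨t, htdef⟩ : ∃ t' : ℝ, expVal q2 (eps 0) = t' := ⟨_, rfl⟩
  have ht : t = q2 / (q2^2 - 1) := htdef ▸ eps0_val hq1
  have htrel : t * (q2^2 - 1) = q2 := by rw [ht]; field_simp
  have ht0 : 0 ≤ t := htdef ▸ expVal_nonneg hq0 _
  have htl : (0.88794:ℝ) < t := by nlinarith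
  have htu : t < 0.88814 := by nlinarith
  -- the tail of η starting at position n-2 is 01(10)^infty
  have hτ : (fun i => η (i + (n - 2))) = prep 0 1 (prep 1 1 (eps 0)) := by
    funext i
    rcases i with _ | _ | i
    · show η (0 + (n-2)) = _
      rw [show 0 + (n-2) = n - 2 by omega, hηlt (n-2) (by omega), hend.1]
      simp [prep]
    · show η (1 + (n-2)) = _
      rw [show 1 + (n-2) = n - 1 by omega, hηlt (n-1) (by omega), hend.2]
      simp [prep]
    · show η (i + 1 + 1 + (n-2)) = _
      rw [show i + 1 + 1 + (n-2) = i + n by omega, hηge (i+n) (by omega),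
        show i + n - n = i by omega]
      simp [prep]
  obtain ⟨vstar, hvdef⟩ : ∃ v' : ℝ, (1 + t)/q2^2 = v' := ⟨_, rfl⟩
  have hvs : expVal q2 (prep 0 1 (prep 1 1 (eps 0))) = vstar := by
    rw [expVal_prep hq1 0 _ (fun i => by unfold prep; split; exacts [by omega, hεdig _])
      (by norm_num), expVal_prep hq1 1 (eps 0) hεdig (by norm_num), htdef, ← hvdef]
    push_cast
    rw [zero_add, div_div, ← pow_two]
  have hxsplit := expVal_split hq1 (n-2) η hηdig
  rw [hτ, hvs, hxdef] at hxsplit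
  have hvrel : vstar * q2^2 = 1 + t := by rw [← hvdef]; field_simp
  have hv0 : 0 ≤ vstar := by
    rw [← hvdef]; positivity
  have hvl : (0.6451:ℝ) < vstar := by nlinarith
  have hvu : vstar < 0.6453 := by nlinarith
  -- THE KEY INEQUALITY
  have hkey : 2 - q2 < x * (q2 - 1) := by
    by_contra hcon
    push_neg at hcon
    rcases (by omega : n = 2 ∨ n = 3 ∨ 4 ≤ n) with h2 | h3 | h4
    · -- n = 2 : x = vstar, contradiction numerically
      have hxv : x = vstar := by
        rw [hxsplit]
        subst h2
        norm_num
      nlinarith [mul_pos (show (0:ℝ) < x - 0.6451 by linarith)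
        (show (0:ℝ) < q2 - 1 - 0.7106 by linarith)]
    · -- n = 3 : digit contradiction
      have h1 := hend.1
      rw [show n - 2 = 1 by omega, hstart.2] at h1
      exact absurd h1 one_ne_zero
    · -- n ≥ 4 : construct three distinct expansions of x
      have hu0 : 0 ≤ q2 * vstar - 1 := by nlinarith
      have hu1 : q2 * vstar - 1 ≤ 1 / (q2 - 1) := by
        rw [le_div_iff₀ hqm]; nlinarith
      obtain ⟨g, hg1, hg2⟩ := exists_expansion hq1 hqlt2 hu0 hu1
      have hz0 : (0:ℝ) ≤ q2^2 * x := by positivity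
      have hz1 : q2^2 * x ≤ 1 / (q2 - 1) := by
        rw [le_div_iff₀ hqm]
        have e1 : q2^2 * (x * (q2-1)) ≤ q2^2 * (2 - q2) :=
          mul_le_mul_of_nonneg_left hcon (by positivity)
        nlinarith
      obtain ⟨g2, hg21, hg22⟩ := exists_expansion hq1 hqlt2 hz0 hz1
      set B : ℕ → ℕ := fun i => if i < n - 2 then η i else prep 1 1 g (i - (n-2)) with hB
      set C : ℕ → ℕ := prep 0 1 (prep 0 1 g2) with hC
      have hBdig : ∀ i, B i ≤ 1 := by
        intro i; rw [hB]; dsimp only; split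
        · exact hηdig i
        · unfold prep; split
          · omega
          · exact hg1 _
      have hCdig : ∀ i, C i ≤ 1 := by
        intro i; rw [hC]; unfold prep; split
        · omega
        · split
          · omega
          · exact hg21 _
      have hBtail : (fun i => B (i + (n-2))) = prep 1 1 g := by
        funext i; rw [hB]; dsimp only; rw [if_neg (by omega)]
        congr 1; omega
      have hBval : expVal q2 B = x := by
        rw [expVal_split hq1 (n-2) B hBdig, hBtail,
          expVal_prep hq1 1 g hg1 le_rfl, hg2]
        have hpre : ∑ i ∈ Finset.range (n-2), (B i : ℝ)/q2^(i+1)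
            = ∑ i ∈ Finset.range (n-2), (η i : ℝ)/q2^(i+1) := by
          refine Finset.sum_congr rfl fun i hi => ?_
          rw [hB]; dsimp only; rw [if_pos (Finset.mem_range.mp hi)]
        rw [hpre, hxsplit]
        congr 1
        rw [show ((1:ℕ):ℝ) + (q2 * vstar - 1) = q2 * vstar by push_cast; ring]
        congr 1
        field_simp
      have hCval : expVal q2 C = x := by
        rw [hC, expVal_prep hq1 0 _ (fun i => by unfold prep; split; exacts [by omega, hg21 _])
          (by norm_num), expVal_prep hq1 0 g2 hg21 (by norm_num), hg22]
        push_cast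
        field_simp
        ring
      have hmemA : η ∈ expansions q2 x := ⟨hηdig, hxdef⟩
      have hmemB : B ∈ expansions q2 x := ⟨hBdig, hBval⟩
      have hmemC : C ∈ expansions q2 x := ⟨hCdig, hCval⟩
      have hAn : η (n-2) = 0 := by rw [hηlt _ (by omega), hend.1]
      have hBn : B (n-2) = 1 := by
        rw [hB]; dsimp only; rw [if_neg (by omega)]
        simp [prep]
      have hA1 : η 1 = 1 := by rw [hηlt 1 (by omega), hstart.2]
      have hB1 : B 1 = 1 := by rw [hB]; dsimp only; rw [if_pos (by omega)]; exact hA1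
      have hC1 : C 1 = 0 := by simp [hC, prep]
      have hAB : η ≠ B := fun h => by
        have := congrFun h (n-2); rw [hAn, hBn] at this; exact absurd this (by omega)
      have hAC : η ≠ C := fun h => by
        have := congrFun h 1; rw [hA1, hC1] at this; exact absurd this (by omega)
      have hBC : B ≠ C := fun h => by
        have := congrFun h 1; rw [hB1, hC1] at this; exact absurd this (by omega)
      have hsub : ({η, B, C} : Set (ℕ → ℕ)) ⊆ expansions q2 x := by
        intro e he
        simp only [Set.mem_insert_iff, Set.mem_singleton_iff] at he
        rcases he with rfl | rfl | rfl
        exacts [hmemA, hmemB, hmemC]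
      have hmk3 : Cardinal.mk ↥({η, B, C} : Set (ℕ → ℕ)) = 3 := by
        rw [Cardinal.mk_insert (by
          simp only [Set.mem_insert_iff, Set.mem_singleton_iff]
          push_neg
          exact ⟨hAB, hAC⟩),
          Cardinal.mk_insert (by simpa using hBC), Cardinal.mk_singleton]
        norm_num
      have h3 : (3:Cardinal) ≤ Cardinal.mk ↥(expansions q2 x) := by
        rw [← hmk3]; exact Cardinal.mk_le_mk_of_subset hsub
      rw [htwo] at h3
      norm_num at h3
  -- x < 1
  have hxlt1 : x < 1 := by
    have hsh := expVal_shift hq1 η hηdig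
    have h0 : η 0 = 0 := by rw [hηlt 0 (by omega), hstart.1]
    rw [h0, hxdef] at hsh
    push_cast at hsh
    have htail : expVal q2 (fun i => η (i+1)) ≤ 1/(q2-1) :=
      expVal_le hq1 _ (fun i => hηdig _)
    rw [hsh, div_lt_one hq0]
    have : 1/(q2-1) < q2 := by rw [div_lt_iff₀ hqm]; nlinarith
    linarith
  constructor
  · -- (0 η)
    have hval : expVal q2 (prep 0 1 η) = x / q2 := by
      rw [expVal_prep hq1 0 η hηdig (by norm_num), hxdef]
      push_cast
      ring
    rw [hval, forced0 hq1 (show x / q2 < 1 / q2 from (div_lt_div_iff_of_pos_right hq0).mpr hxlt1),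
      show q2 * (x / q2) = x by field_simp,
      Cardinal.mk_image_eq (prep_inj 0)]
    exact htwo
  · -- (1 η)
    have hval : expVal q2 (prep 1 1 η) = (1 + x) / q2 := by
      rw [expVal_prep hq1 1 η hηdig (by norm_num), hxdef]
      push_cast
      ring
    have hygt : 1 / (q2 * (q2 - 1)) < (1 + x) / q2 := by
      rw [div_lt_div_iff₀ (by positivity) hq0]
      nlinarith
    rw [hval, forced1 hq1 hygt,
      show q2 * ((1 + x) / q2) - 1 = x by field_simp; ring,
      Cardinal.mk_image_eq (prep_inj 1)]
    exact htwo

end Main
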